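/- Let A and B be real symmetric n×n matrices such that A + B and A − B are both positive semidefinite, with positive semidefinite square roots (A+B)^{1/2} and (A−B)^{1/2}. Set Q₊ = (A+B)^{1/2} + (A−B)^{1/2} and Q₋ = (A+B)^{1/2} − (A−B)^{1/2}, and let K be the 2n×2n block matrix (1/2)·[[Q₊, Q₋], [Q₋, Q₊]]. Then K is positive semidefinite and K·K = [[A, B], [B, A]]; i.e., K is the positive semidefinite square root Λ^{1/2} of the TDDFRT supermatrix Λ = [[A, B], [B, A]]. -/

import Mathlib

open Matrix

lemma psd_smul_aux {n : Type*} [Fintype n] {M : Matrix n n ℝ} (hM : M.PosSemidef)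
    {c : ℝ} (hc : 0 ≤ c) : (c • M).PosSemidef := by
  refine ⟨by
    have := hM.1
    unfold Matrix.IsHermitian at *
    rw [conjTranspose_smul, this]; simp, fun x => ?_⟩
  exact (hM.smul hc).2 x

lemma block_same {n : ℕ} {M : Matrix (Fin n) (Fin n) ℝ} (hM : M.PosSemidef) :
    (fromBlocks M M M M).PosSemidef := by
  have : fromBlocks M M M M =
      (fromRows (1 : Matrix (Fin n) (Fin n) ℝ) 1) * M *
        (fromRows (1 : Matrix (Fin n) (Fin n) ℝ) 1)ᴴ := by
    ext i j
    cases i <;> cases j <;>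
      simp [fromRows_apply_inl, fromRows_apply_inr, fromBlocks, mul_apply, Matrix.one_apply, Finset.sum_ite_eq,
        conjTranspose_apply]
  rw [this]
  exact hM.mul_mul_conjTranspose_same _

lemma block_neg {n : ℕ} {M : Matrix (Fin n) (Fin n) ℝ} (hM : M.PosSemidef) :
    (fromBlocks M (-M) (-M) M).PosSemidef := by
  have : fromBlocks M (-M) (-M) M =
      (fromRows (1 : Matrix (Fin n) (Fin n) ℝ) (-1)) * M *
        (fromRows (1 : Matrix (Fin n) (Fin n) ℝ) (-1))ᴴ := by
    ext i j
    cases i <;> cases j <;>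
      simp [fromRows_apply_inl, fromRows_apply_inr, fromBlocks, mul_apply, Matrix.one_apply, Finset.sum_ite_eq,
        conjTranspose_apply, mul_comm]
  rw [this]
  exact hM.mul_mul_conjTranspose_same _

/-- Let `A`, `B` be real symmetric with `A + B` and `A − B` positive
semidefinite, with positive semidefinite square roots `SP` and `SM`. With
`Q₊ = SP + SM`, `Q₋ = SP − SM` and `K = (1/2)·[[Q₊, Q₋], [Q₋, Q₊]]`, the matrix `K`
is positive semidefinite and `K·K = [[A, B], [B, A]]`: `K` is the positive
semidefinite square root of the TDDFRT supermatrix `Λ`. -/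
theorem tddfrt_supermatrix_sqrt (n : ℕ)
    (A B : Matrix (Fin n) (Fin n) ℝ)
    (hA : A.IsHermitian) (hB : B.IsHermitian)
    (hplus : (A + B).PosSemidef) (hminus : (A - B).PosSemidef)
    (SP SM : Matrix (Fin n) (Fin n) ℝ)
    (hSP : SP.PosSemidef) (hSM : SM.PosSemidef)
    (hSPsq : SP * SP = A + B) (hSMsq : SM * SM = A - B) :
    ((1 / 2 : ℝ) • fromBlocks (SP + SM) (SP - SM) (SP - SM) (SP + SM)).PosSemidef ∧
    ((1 / 2 : ℝ) • fromBlocks (SP + SM) (SP - SM) (SP - SM) (SP + SM)) *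
        ((1 / 2 : ℝ) • fromBlocks (SP + SM) (SP - SM) (SP - SM) (SP + SM)) =
      fromBlocks A B B A := by
  constructor
  · have h1 : fromBlocks (SP + SM) (SP - SM) (SP - SM) (SP + SM) =
        fromBlocks SP SP SP SP + fromBlocks SM (-SM) (-SM) SM := by
      rw [fromBlocks_add]; congr 1 <;> abel
    rw [h1]
    exact psd_smul_aux ((block_same hSP).add (block_neg hSM)) (by norm_num)
  · rw [smul_mul_smul_comm, fromBlocks_multiply]
    have hA2 : (SP + SM) * (SP + SM) + (SP - SM) * (SP - SM) = (4 : ℝ) • A := by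
      have : (SP + SM) * (SP + SM) + (SP - SM) * (SP - SM)
          = (2:ℝ) • (SP * SP) + (2:ℝ) • (SM * SM) := by
        simp [add_mul, mul_add, sub_mul, mul_sub, two_smul]; abel
      rw [this, hSPsq, hSMsq]
      simp [smul_add, smul_sub]
      module
    have hB2 : (SP + SM) * (SP - SM) + (SP - SM) * (SP + SM) = (4 : ℝ) • B := by
      have : (SP + SM) * (SP - SM) + (SP - SM) * (SP + SM)
          = (2:ℝ) • (SP * SP) - (2:ℝ) • (SM * SM) := by
        simp [add_mul, mul_add, sub_mul, mul_sub, two_smul]; abel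
      rw [this, hSPsq, hSMsq]
      module
    have hA2' : (SP - SM) * (SP - SM) + (SP + SM) * (SP + SM) = (4 : ℝ) • A := by
      rw [← hA2]; abel
    have hB2' : (SP - SM) * (SP + SM) + (SP + SM) * (SP - SM) = (4 : ℝ) • B := by
      rw [← hB2]; abel
    rw [hA2, hB2, hA2', hB2']
    ext i j
    cases i <;> cases j <;> simp [fromBlocks] <;> ring
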